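/- Let a ≥ 2 be an integer. The function f(v) := a e^{av}/(e^{av} − 1) − e^v/(e^v − 1), defined for v > 0, is strictly increasing on (0, ∞), tends to (a−1)/2 as v → 0⁺, and tends to a − 1 as v → ∞; in particular, for every real λ with 1 < λ < 2 there exists a unique v > 0 with f(v) = λ(a−1)/2. -/

import Mathlib

open Real Filter Set

private lemma sinh_nsmul_lt' (n : ℕ) (hn : 2 ≤ n) {t : ℝ} (ht : 0 < t) :
    (n : ℝ) * Real.sinh t < Real.sinh ((n : ℝ) * t) := by
  have hst : 0 < Real.sinh t := Real.sinh_pos_iff.2 ht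
  induction n with
  | zero => omega
  | succ n ih =>
    have h1 : ((n + 1 : ℕ) : ℝ) * t = (n : ℝ) * t + t := by push_cast; ring
    rw [h1, Real.sinh_add]
    rcases Nat.lt_or_ge n 2 with h | h
    · have hn1 : n = 1 := by omega
      subst hn1
      have hc : 1 < Real.cosh t := Real.one_lt_cosh.2 ht.ne'
      have hc0 : 1 < Real.cosh ((1 : ℕ) * t) := by
        push_cast; rw [one_mul]; exact Real.one_lt_cosh.2 ht.ne'
      push_cast at *
      simp only [one_mul] at *
      nlinarith
    · have ihn := ih h
      have hc1 : 1 ≤ Real.cosh ((n : ℝ) * t) := Real.one_le_cosh _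
      have hc2 : 1 ≤ Real.cosh t := Real.one_le_cosh _
      have hsn : 0 < Real.sinh ((n : ℝ) * t) :=
        Real.sinh_pos_iff.2 (by positivity)
      push_cast
      nlinarith

/-- The explicit function. -/
private noncomputable def F (a : ℕ) : ℝ → ℝ := fun v =>
  (a : ℝ) * Real.exp ((a : ℝ) * v) / (Real.exp ((a : ℝ) * v) - 1)
    - Real.exp v / (Real.exp v - 1)

private lemma hasDerivAt_F (a : ℕ) (ha : 2 ≤ a) {x : ℝ} (hx : 0 < x) :
    HasDerivAt (F a)
      (Real.exp x / (Real.exp x - 1) ^ 2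
        - (a : ℝ) ^ 2 * Real.exp ((a : ℝ) * x) / (Real.exp ((a : ℝ) * x) - 1) ^ 2) x := by
  have ha0 : (0 : ℝ) < a := by positivity
  have hax : 0 < (a : ℝ) * x := by positivity
  have h1 : 1 < Real.exp ((a : ℝ) * x) := by
    rw [← Real.exp_zero]; exact Real.exp_lt_exp.2 hax
  have h2 : 1 < Real.exp x := by rw [← Real.exp_zero]; exact Real.exp_lt_exp.2 hx
  have hne1 : Real.exp ((a : ℝ) * x) - 1 ≠ 0 := by linarith
  have hne2 : Real.exp x - 1 ≠ 0 := by linarith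
  have hE1 : HasDerivAt (fun v : ℝ => Real.exp ((a : ℝ) * v))
      (Real.exp ((a : ℝ) * x) * (a : ℝ)) x := by
    simpa using ((hasDerivAt_id x).const_mul (a : ℝ)).exp
  have hE2 : HasDerivAt Real.exp (Real.exp x) x := Real.hasDerivAt_exp x
  have hnum1 : HasDerivAt (fun v : ℝ => (a : ℝ) * Real.exp ((a : ℝ) * v))
      ((a : ℝ) * (Real.exp ((a : ℝ) * x) * (a : ℝ))) x := hE1.const_mul _
  have hden1 : HasDerivAt (fun v : ℝ => Real.exp ((a : ℝ) * v) - 1)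
      (Real.exp ((a : ℝ) * x) * (a : ℝ)) x := hE1.sub_const 1
  have hden2 : HasDerivAt (fun v : ℝ => Real.exp v - 1) (Real.exp x) x := hE2.sub_const 1
  have hq1 := hnum1.div hden1 hne1
  have hq2 := hE2.div hden2 hne2
  have h := hq1.sub hq2
  refine h.congr_deriv ?_
  field_simp
  ring

private lemma sinh_identity {x : ℝ} (hx : x ≠ 0) :
    Real.exp x / (Real.exp x - 1) ^ 2 = 1 / (4 * Real.sinh (x / 2) ^ 2) := by
  have hs : Real.exp (x / 2) ≠ 0 := Real.exp_ne_zero _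
  have hx2 : Real.exp x = Real.exp (x / 2) * Real.exp (x / 2) := by
    rw [← Real.exp_add]; ring_nf
  have hsinh : Real.sinh (x / 2) = (Real.exp (x / 2) - (Real.exp (x / 2))⁻¹) / 2 := by
    rw [Real.sinh_eq, Real.exp_neg]
  have hsne : Real.sinh (x / 2) ≠ 0 := Real.sinh_ne_zero.2 (by simpa using hx)
  have hne : Real.exp x - 1 ≠ 0 := by
    intro h
    exact hx ((Real.exp_eq_one_iff x).1 (by linarith))
  rw [hsinh] at hsne ⊢
  rw [hx2] at hne ⊢
  field_simp
  field_simp at hsne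
  ring

private lemma deriv_F_pos (a : ℕ) (ha : 2 ≤ a) {x : ℝ} (hx : 0 < x) :
    0 < Real.exp x / (Real.exp x - 1) ^ 2
        - (a : ℝ) ^ 2 * Real.exp ((a : ℝ) * x) / (Real.exp ((a : ℝ) * x) - 1) ^ 2 := by
  have ha0 : (0 : ℝ) < a := by positivity
  have hax : 0 < (a : ℝ) * x := by positivity
  have key : (a : ℝ) * Real.sinh (x / 2) < Real.sinh ((a : ℝ) * (x / 2)) :=
    sinh_nsmul_lt' a ha (by positivity)
  have hs1 : 0 < Real.sinh (x / 2) := Real.sinh_pos_iff.2 (by positivity)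
  have hs2 : 0 < Real.sinh ((a : ℝ) * (x / 2)) := Real.sinh_pos_iff.2 (by positivity)
  have e1 : Real.exp x / (Real.exp x - 1) ^ 2 = 1 / (4 * Real.sinh (x / 2) ^ 2) :=
    sinh_identity hx.ne'
  have e2 : Real.exp ((a : ℝ) * x) / (Real.exp ((a : ℝ) * x) - 1) ^ 2
      = 1 / (4 * Real.sinh ((a : ℝ) * x / 2) ^ 2) := sinh_identity hax.ne'
  have hhalf : (a : ℝ) * x / 2 = (a : ℝ) * (x / 2) := by ring
  rw [hhalf] at e2
  rw [e1, mul_div_assoc, e2, sub_pos, mul_one_div, div_lt_div_iff₀ (by positivity) (by positivity)]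
  have hsq : ((a : ℝ) * Real.sinh (x / 2)) * ((a : ℝ) * Real.sinh (x / 2))
      < Real.sinh ((a : ℝ) * (x / 2)) * Real.sinh ((a : ℝ) * (x / 2)) :=
    mul_self_lt_mul_self (by positivity) key
  nlinarith

private lemma F_strictMono (a : ℕ) (ha : 2 ≤ a) : StrictMonoOn (F a) (Set.Ioi 0) := by
  apply strictMonoOn_of_deriv_pos (convex_Ioi 0)
  · intro x hx
    exact ((hasDerivAt_F a ha hx).continuousAt).continuousWithinAt
  · intro x hx
    rw [interior_Ioi] at hx
    rw [(hasDerivAt_F a ha hx).deriv]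
    exact deriv_F_pos a ha hx

/-- `(exp x - 1 - x)/x² → 1/2` as `x → 0⁺`. -/
private lemma tendsto_D :
    Tendsto (fun x : ℝ => (Real.exp x - 1 - x) / x ^ 2) (nhdsWithin 0 (Set.Ioi 0))
      (nhds (1 / 2)) := by
  have h : Tendsto (fun x : ℝ => (Real.exp x - 1 - x) / x ^ 2 - 1 / 2)
      (nhdsWithin 0 (Set.Ioi 0)) (nhds 0) := by
    apply squeeze_zero_norm' (a := fun x : ℝ => (2 / 9) * x)
    · filter_upwards [Ioo_mem_nhdsGT (one_pos : (0:ℝ) < 1)]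
        with x hx
      obtain ⟨hx0, hx1⟩ := hx
      have hb := Real.exp_bound (x := x) (by rw [abs_of_pos hx0]; linarith) (n := 3) (by norm_num)
      have hsum : ∑ m ∈ Finset.range 3, x ^ m / (m.factorial : ℝ) = 1 + x + x ^ 2 / 2 := by
        simp [Finset.sum_range_succ, Nat.factorial]
      rw [hsum] at hb
      have hb' : |Real.exp x - (1 + x + x ^ 2 / 2)| ≤ (2 / 9) * x ^ 3 := by
        rw [abs_of_pos hx0] at hb
        calc |Real.exp x - (1 + x + x ^ 2 / 2)|
            ≤ x ^ 3 * ((3 : ℕ).succ / ((3 : ℕ).factorial * 3)) := hb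
          _ = (2 / 9) * x ^ 3 := by norm_num [Nat.factorial, mul_comm]
      have hx2 : (0 : ℝ) < x ^ 2 := by positivity
      have heq : (Real.exp x - 1 - x) / x ^ 2 - 1 / 2
          = (Real.exp x - (1 + x + x ^ 2 / 2)) / x ^ 2 := by
        field_simp
        ring
      rw [Real.norm_eq_abs, heq, abs_div, abs_of_pos hx2, div_le_iff₀ hx2]
      calc |Real.exp x - (1 + x + x ^ 2 / 2)| ≤ (2 / 9) * x ^ 3 := hb'
        _ = (2 / 9) * x * x ^ 2 := by ring
    · have h2 : Tendsto (fun x : ℝ => (2 / 9) * x) (nhds 0) (nhds ((2 / 9) * 0)) :=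
        (tendsto_id).const_mul _
      simpa using h2.mono_left nhdsWithin_le_nhds
  have := h.add_const (1 / 2)
  simpa using this

private lemma tendsto_F_zero (a : ℕ) (ha : 2 ≤ a) :
    Tendsto (F a) (nhdsWithin 0 (Set.Ioi 0)) (nhds (((a : ℝ) - 1) / 2)) := by
  have ha0 : (0 : ℝ) < a := by positivity
  set D : ℝ → ℝ := fun x => (Real.exp x - 1 - x) / x ^ 2 with hD
  set E : ℝ → ℝ := fun x => (Real.exp x - 1) / x with hE
  -- F a v = (a-1) + (D v - a * D (a*v)) / (E (a*v) * E v) for v > 0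
  have key : ∀ v : ℝ, 0 < v →
      F a v = ((a : ℝ) - 1) + (D v - (a : ℝ) * D ((a : ℝ) * v)) / (E ((a : ℝ) * v) * E v) := by
    intro v hv
    have hav : 0 < (a : ℝ) * v := by positivity
    have h1 : 1 < Real.exp ((a : ℝ) * v) := by
      rw [← Real.exp_zero]; exact Real.exp_lt_exp.2 hav
    have h2 : 1 < Real.exp v := by rw [← Real.exp_zero]; exact Real.exp_lt_exp.2 hv
    have hne1 : Real.exp ((a : ℝ) * v) - 1 ≠ 0 := by linarith
    have hne2 : Real.exp v - 1 ≠ 0 := by linarith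
    simp only [F, hD, hE]
    field_simp
    ring
  have hEtend : Tendsto E (nhdsWithin 0 (Set.Ioi 0)) (nhds 1) := by
    have heq : ∀ x : ℝ, 0 < x → E x = 1 + x * D x := by
      intro x hx
      simp only [hE, hD]
      field_simp
      ring
    have h1 : Tendsto (fun x : ℝ => 1 + x * D x) (nhdsWithin 0 (Set.Ioi 0)) (nhds 1) := by
      have hx : Tendsto (fun x : ℝ => x) (nhdsWithin 0 (Set.Ioi 0)) (nhds 0) :=
        tendsto_id.mono_left nhdsWithin_le_nhds
      have := (hx.mul tendsto_D).const_add 1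
      simpa using this
    exact h1.congr' (by filter_upwards [self_mem_nhdsWithin] with x hx; exact (heq x hx).symm)
  have hmul : Tendsto (fun v : ℝ => (a : ℝ) * v) (nhdsWithin 0 (Set.Ioi 0))
      (nhdsWithin 0 (Set.Ioi 0)) := by
    rw [tendsto_nhdsWithin_iff]
    constructor
    · have h1 : Tendsto (fun v : ℝ => (a : ℝ) * v) (nhds 0) (nhds ((a : ℝ) * 0)) :=
        (tendsto_id).const_mul _
      rw [mul_zero] at h1
      exact h1.mono_left nhdsWithin_le_nhds
    · filter_upwards [self_mem_nhdsWithin] with x hx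
      exact mul_pos ha0 hx
  have hDav : Tendsto (fun v : ℝ => D ((a : ℝ) * v)) (nhdsWithin 0 (Set.Ioi 0))
      (nhds (1 / 2)) := tendsto_D.comp hmul
  have hEav : Tendsto (fun v : ℝ => E ((a : ℝ) * v)) (nhdsWithin 0 (Set.Ioi 0))
      (nhds 1) := hEtend.comp hmul
  have hnum : Tendsto (fun v : ℝ => D v - (a : ℝ) * D ((a : ℝ) * v))
      (nhdsWithin 0 (Set.Ioi 0)) (nhds (1 / 2 - (a : ℝ) * (1 / 2))) :=
    tendsto_D.sub (hDav.const_mul _)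
  have hden : Tendsto (fun v : ℝ => E ((a : ℝ) * v) * E v)
      (nhdsWithin 0 (Set.Ioi 0)) (nhds (1 * 1)) := hEav.mul hEtend
  have hratio := hnum.div hden (by norm_num)
  have hfinal := hratio.const_add ((a : ℝ) - 1)
  have hval : ((a : ℝ) - 1) + (1 / 2 - (a : ℝ) * (1 / 2)) / (1 * 1) = ((a : ℝ) - 1) / 2 := by
    ring
  rw [hval] at hfinal
  exact hfinal.congr' (by filter_upwards [self_mem_nhdsWithin] with v hv; exact (key v hv).symm)

private lemma tendsto_F_atTop (a : ℕ) (ha : 2 ≤ a) :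
    Tendsto (F a) atTop (nhds ((a : ℝ) - 1)) := by
  have ha0 : (0 : ℝ) < a := by positivity
  have key : ∀ v : ℝ, F a v = (a : ℝ) / (1 - Real.exp (-((a : ℝ) * v)))
      - 1 / (1 - Real.exp (-v)) := by
    intro v
    have h1 : Real.exp ((a : ℝ) * v) ≠ 0 := Real.exp_ne_zero _
    have h2 : Real.exp v ≠ 0 := Real.exp_ne_zero _
    simp only [F, Real.exp_neg]
    rw [show (1 : ℝ) - (Real.exp ((a : ℝ) * v))⁻¹
        = (Real.exp ((a : ℝ) * v) - 1) / Real.exp ((a : ℝ) * v) by field_simp,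
      show (1 : ℝ) - (Real.exp v)⁻¹ = (Real.exp v - 1) / Real.exp v by field_simp,
      div_div_eq_mul_div, div_div_eq_mul_div]
    ring_nf
  have e1 : Tendsto (fun v : ℝ => Real.exp (-((a : ℝ) * v))) atTop (nhds 0) := by
    apply Real.tendsto_exp_atBot.comp
    apply tendsto_neg_atBot_iff.2
    exact (tendsto_id.const_mul_atTop ha0)
  have e2 : Tendsto (fun v : ℝ => Real.exp (-v)) atTop (nhds 0) := by
    apply Real.tendsto_exp_atBot.comp
    exact tendsto_neg_atTop_atBot
  have t1 : Tendsto (fun v : ℝ => (a : ℝ) / (1 - Real.exp (-((a : ℝ) * v)))) atTop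
      (nhds ((a : ℝ) / (1 - 0))) :=
    tendsto_const_nhds.div (tendsto_const_nhds.sub e1) (by norm_num)
  have t2 : Tendsto (fun v : ℝ => 1 / (1 - Real.exp (-v))) atTop (nhds (1 / (1 - 0))) :=
    tendsto_const_nhds.div (tendsto_const_nhds.sub e2) (by norm_num)
  have := t1.sub t2
  simp only [sub_zero, div_one] at this
  exact this.congr fun v => (key v).symm

theorem saddle_point_function_increasing
    (a : ℕ) (ha : 2 ≤ a) (f : ℝ → ℝ)
    (hf : ∀ v : ℝ, f v =
      (a : ℝ) * Real.exp ((a : ℝ) * v) / (Real.exp ((a : ℝ) * v) - 1)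
        - Real.exp v / (Real.exp v - 1)) :
    StrictMonoOn f (Set.Ioi 0) ∧
      Filter.Tendsto f (nhdsWithin 0 (Set.Ioi 0)) (nhds (((a : ℝ) - 1) / 2)) ∧
      Filter.Tendsto f Filter.atTop (nhds ((a : ℝ) - 1)) ∧
      ∀ lam : ℝ, 1 < lam → lam < 2 →
        ∃! v : ℝ, 0 < v ∧ f v = lam * ((a : ℝ) - 1) / 2 := by
  have hfF : f = F a := funext fun v => hf v
  subst hfF
  have hmono := F_strictMono a ha
  have h0 := tendsto_F_zero a ha
  have htop := tendsto_F_atTop a ha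
  refine ⟨hmono, h0, htop, ?_⟩
  intro lam hl1 hl2
  have ha1 : (1 : ℝ) ≤ (a : ℝ) - 1 := by
    have : (2 : ℝ) ≤ a := by exact_mod_cast ha
    linarith
  set y := lam * ((a : ℝ) - 1) / 2 with hy
  have hy1 : ((a : ℝ) - 1) / 2 < y := by
    rw [hy, div_lt_div_iff₀ (by norm_num) (by norm_num)]
    nlinarith
  have hy2 : y < (a : ℝ) - 1 := by
    rw [hy, div_lt_iff₀ (by norm_num)]
    nlinarith
  -- find v₁ with F a v₁ < y
  have hev1 : ∀ᶠ v in nhdsWithin 0 (Set.Ioi 0), F a v < y :=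
    h0.eventually_lt_const hy1
  obtain ⟨v₁, hv₁lt, hv₁pos⟩ :=
    (hev1.and self_mem_nhdsWithin).exists
  -- find v₂ > v₁ with F a v₂ > y
  have hev2 : ∀ᶠ v in atTop, y < F a v := htop.eventually_const_lt hy2
  obtain ⟨v₂, hv₂gt, hv₂big⟩ := (hev2.and (eventually_gt_atTop v₁)).exists
  have hv₂pos : 0 < v₂ := lt_trans hv₁pos hv₂big
  -- IVT
  have hcont : ContinuousOn (F a) (Set.Icc v₁ v₂) := by
    intro x hx
    have hx0 : 0 < x := lt_of_lt_of_le hv₁pos hx.1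
    exact ((hasDerivAt_F a ha hx0).continuousAt).continuousWithinAt
  have hsub : Set.Icc (F a v₁) (F a v₂) ⊆ F a '' Set.Icc v₁ v₂ :=
    intermediate_value_Icc (le_of_lt hv₂big) hcont
  have hymem : y ∈ Set.Icc (F a v₁) (F a v₂) := ⟨le_of_lt hv₁lt, le_of_lt hv₂gt⟩
  obtain ⟨v, hvmem, hveq⟩ := hsub hymem
  have hvpos : 0 < v := lt_of_lt_of_le hv₁pos hvmem.1
  refine ⟨v, ⟨hvpos, hveq⟩, ?_⟩
  rintro w ⟨hwpos, hweq⟩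
  exact hmono.injOn hwpos hvpos (hweq.trans hveq.symm)
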